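/- arXiv:1707.08512 — 8 statements merged into one kernel-verified Lean document; each statement's English description precedes it below -/
import Mathlib

section
/- Let H be a real Hilbert space and A : ℝ₊ × H → H a parameterized single-valued map that is uniformly M-Lipschitz and uniformly α-strongly monotone (α > 0) in its second variable. If A is semi-differentiable at x ∈ H, i.e. the limit D_sA(x)(w) := lim_{τ→0, w'→w} (A(τ, x+τw') − A(0,x))/τ exists for all w ∈ H, then the semi-derivative D_sA(x) : H → H is M-Lipschitz continuous and α-strongly monotone. -/
open Filter Topology
open scoped RealInnerProductSpace

variable {H : Type*} [NormedAddCommGroup H] [InnerProductSpace ℝ H] [CompleteSpace H]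

theorem stmt4 (A : ℝ → H → H) (M α : ℝ) (hα : 0 < α)
    (hLip : ∀ t ≥ (0:ℝ), ∀ x₁ x₂ : H, ‖A t x₂ - A t x₁‖ ≤ M * ‖x₂ - x₁‖)
    (hMon : ∀ t ≥ (0:ℝ), ∀ x₁ x₂ : H, α * ‖x₂ - x₁‖ ^ 2 ≤ ⟪A t x₂ - A t x₁, x₂ - x₁⟫)
    (x : H) (DA : H → H)
    (hsemi : ∀ w : H,
      Tendsto (fun p : ℝ × H => (p.1)⁻¹ • (A p.1 (x + p.1 • p.2) - A 0 x))
        ((𝓝[>] (0:ℝ)) ×ˢ 𝓝 w) (𝓝 (DA w))) :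
    (∀ w₁ w₂ : H, ‖DA w₂ - DA w₁‖ ≤ M * ‖w₂ - w₁‖) ∧
    (∀ w₁ w₂ : H, α * ‖w₂ - w₁‖ ^ 2 ≤ ⟪DA w₂ - DA w₁, w₂ - w₁⟫) := by
  have key : ∀ w₁ w₂ : H,
      Tendsto (fun τ : ℝ => τ⁻¹ • (A τ (x + τ • w₂) - A τ (x + τ • w₁)))
        (𝓝[>] (0:ℝ)) (𝓝 (DA w₂ - DA w₁)) := by
    intro w₁ w₂
    have hw : ∀ w : H, Tendsto (fun τ : ℝ => τ⁻¹ • (A τ (x + τ • w) - A 0 x))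
        (𝓝[>] (0:ℝ)) (𝓝 (DA w)) := by
      intro w
      have hcomp : Tendsto (fun τ : ℝ => ((τ, w) : ℝ × H)) (𝓝[>] (0:ℝ))
          ((𝓝[>] (0:ℝ)) ×ˢ 𝓝 w) := tendsto_id.prodMk tendsto_const_nhds
      exact (hsemi w).comp hcomp
    have := (hw w₂).sub (hw w₁)
    refine this.congr (fun τ => ?_)
    rw [← smul_sub]
    congr 1
    abel
  have hdiff : ∀ (τ : ℝ) (w₁ w₂ : H), (x + τ • w₂) - (x + τ • w₁) = τ • (w₂ - w₁) := by
    intro τ w₁ w₂; rw [smul_sub]; abel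
  constructor
  · intro w₁ w₂
    have hn : Tendsto (fun τ : ℝ => ‖τ⁻¹ • (A τ (x + τ • w₂) - A τ (x + τ • w₁))‖)
        (𝓝[>] (0:ℝ)) (𝓝 ‖DA w₂ - DA w₁‖) := (continuous_norm.tendsto _).comp (key w₁ w₂)
    refine le_of_tendsto hn ?_
    filter_upwards [self_mem_nhdsWithin] with τ (hτ : 0 < τ)
    rw [norm_smul, norm_inv, Real.norm_of_nonneg hτ.le]
    calc τ⁻¹ * ‖A τ (x + τ • w₂) - A τ (x + τ • w₁)‖
        ≤ τ⁻¹ * (M * ‖(x + τ • w₂) - (x + τ • w₁)‖) := by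
          exact mul_le_mul_of_nonneg_left (hLip τ hτ.le _ _) (inv_nonneg.2 hτ.le)
      _ = M * ‖w₂ - w₁‖ := by
          rw [hdiff, norm_smul, Real.norm_of_nonneg hτ.le]
          field_simp
  · intro w₁ w₂
    have hn : Tendsto (fun τ : ℝ => ⟪τ⁻¹ • (A τ (x + τ • w₂) - A τ (x + τ • w₁)), w₂ - w₁⟫)
        (𝓝[>] (0:ℝ)) (𝓝 ⟪DA w₂ - DA w₁, w₂ - w₁⟫) := by
      exact ((continuous_inner.comp ((continuous_id).prodMk continuous_const)).tendsto
        _).comp (key w₁ w₂)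
    refine ge_of_tendsto hn ?_
    filter_upwards [self_mem_nhdsWithin] with τ (hτ : 0 < τ)
    have h1 := hMon τ hτ.le (x + τ • w₁) (x + τ • w₂)
    rw [hdiff, norm_smul, Real.norm_of_nonneg hτ.le] at h1
    rw [real_inner_smul_left]
    have h2 : ⟪A τ (x + τ • w₂) - A τ (x + τ • w₁), w₂ - w₁⟫
        = τ⁻¹ * ⟪A τ (x + τ • w₂) - A τ (x + τ • w₁), τ • (w₂ - w₁)⟫ := by
      rw [real_inner_smul_right]; field_simp
    rw [h2]
    have := mul_le_mul_of_nonneg_left h1 (inv_nonneg.2 hτ.le)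
    calc α * ‖w₂ - w₁‖ ^ 2 = τ⁻¹ * (τ⁻¹ * (α * (τ * ‖w₂ - w₁‖) ^ 2)) := by
          field_simp
      _ ≤ τ⁻¹ * (τ⁻¹ * ⟪A τ (x + τ • w₂) - A τ (x + τ • w₁), τ • (w₂ - w₁)⟫) := by
          exact mul_le_mul_of_nonneg_left this (inv_nonneg.2 hτ.le)
end

section
/- Let f : ℝ₊ × ℝ → ℝ be defined by f(t,x) := |x − t|, let x = 0 and v = 0 ∈ ∂f(0,·)(0). Then for every τ > 0 and w ∈ ℝ the second-order difference quotient equals Δ²_τ f(0|0)(w) = (|w − 1| − 1)/τ, and the family (Δ²_τ f(0|0))_{τ>0} epi-converges as τ → 0 to the function equal to −∞ on [0,2] and +∞ on ℝ \ [0,2]. In particular the second epi-derivative d²_e f(0|0) is not a proper function and d²_e f(0|0)(0) ≠ 0. -/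
open Filter Topology

/-- Epi-convergence (Mosco = Painlevé–Kuratowski on ℝ) of a family of real-valued
functions `F τ` (τ > 0) to an extended-real-valued function `g` as τ → 0⁺. -/
def EpiConvTo (F : ℝ → ℝ → ℝ) (g : ℝ → EReal) : Prop :=
  (∀ w : ℝ, ∃ φ : ℝ → ℝ, Tendsto φ (𝓝[>] (0:ℝ)) (𝓝 w) ∧
    Filter.limsup (fun τ => ((F τ (φ τ) : ℝ) : EReal)) (𝓝[>] (0:ℝ)) ≤ g w) ∧
  (∀ w : ℝ, ∀ φ : ℝ → ℝ, Tendsto φ (𝓝[>] (0:ℝ)) (𝓝 w) →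
    g w ≤ Filter.liminf (fun τ => ((F τ (φ τ) : ℝ) : EReal)) (𝓝[>] (0:ℝ)))

/-- `g` is a proper extended-real-valued function. -/
def ProperE (g : ℝ → EReal) : Prop := (∀ w, g w ≠ ⊥) ∧ ∃ w, g w ≠ ⊤

/-- Second-order difference quotient of `f(t,x) = |x − t|` at `x = 0` for `v = 0`. -/
noncomputable def q6 (τ w : ℝ) : ℝ := (|w - 1| - 1) / τ

/-- The epi-limit: `−∞` on `[0,2]` and `+∞` outside. -/
noncomputable def g6 : ℝ → EReal := fun w => if w ∈ Set.Icc (0:ℝ) 2 then ⊥ else ⊤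

/-- Coercion of a real family tending to `atBot` tends to `⊥` in `EReal`. -/
lemma coe_tendsto_bot {α : Type*} {l : Filter α} {u : α → ℝ}
    (h : Tendsto u l atBot) : Tendsto (fun a => ((u a : ℝ) : EReal)) l (𝓝 ⊥) := by
  rw [EReal.tendsto_nhds_bot_iff_real]
  intro x
  filter_upwards [h.eventually (eventually_lt_atBot x)] with a ha
  exact_mod_cast ha

/-- Coercion of a real family tending to `atTop` tends to `⊤` in `EReal`. -/
lemma coe_tendsto_top {α : Type*} {l : Filter α} {u : α → ℝ}
    (h : Tendsto u l atTop) : Tendsto (fun a => ((u a : ℝ) : EReal)) l (𝓝 ⊤) := by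
  rw [EReal.tendsto_nhds_top_iff_real]
  intro x
  filter_upwards [h.eventually (eventually_gt_atTop x)] with a ha
  exact_mod_cast ha

theorem stmt6 :
    (∀ τ > (0:ℝ), ∀ w : ℝ,
      (|(0:ℝ) + τ * w - τ| - |(0:ℝ) - τ| - τ * (0 * w)) / τ ^ 2 = q6 τ w) ∧
    EpiConvTo q6 g6 ∧
    ¬ ProperE g6 ∧ g6 0 ≠ 0 := by
  refine ⟨?_, ⟨?_, ?_⟩, ?_, ?_⟩
  · -- the formula for the difference quotient
    intro τ hτ w
    have h1 : (0:ℝ) + τ * w - τ = τ * (w - 1) := by ring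
    have h2 : |(0:ℝ) - τ| = τ := by rw [zero_sub, abs_neg, abs_of_pos hτ]
    rw [h1, h2, abs_mul, abs_of_pos hτ, q6]
    field_simp
    ring
  · -- recovery sequences (limsup inequality)
    intro w
    by_cases hw : w ∈ Set.Icc (0:ℝ) 2
    · refine ⟨fun τ => w + Real.sqrt τ * (1 - w), ?_, ?_⟩
      · have hs : Tendsto Real.sqrt (𝓝[>] (0:ℝ)) (𝓝 0) := by
          have := (Real.continuous_sqrt.tendsto 0).mono_left
            (nhdsWithin_le_nhds (s := Set.Ioi (0:ℝ)))
          simpa using this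
        have : Tendsto (fun τ => w + Real.sqrt τ * (1 - w)) (𝓝[>] (0:ℝ))
            (𝓝 (w + 0 * (1 - w))) :=
          tendsto_const_nhds.add (hs.mul tendsto_const_nhds)
        simpa using this
      · -- show the values tend to ⊥
        have habs : |w - 1| ≤ 1 := by
          rw [abs_le]; constructor <;> [linarith [hw.1]; linarith [hw.2]]
        have hbound : ∀ᶠ τ in 𝓝[>] (0:ℝ),
            q6 τ (w + Real.sqrt τ * (1 - w)) ≤ -(Real.sqrt τ)⁻¹ := by
          filter_upwards [Ioo_mem_nhdsGT (by norm_num : (0:ℝ) < 1)]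
            with τ hτ
          obtain ⟨hτ0, hτ1⟩ := hτ
          have hsτ0 : 0 < Real.sqrt τ := Real.sqrt_pos.2 hτ0
          have hsτ1 : Real.sqrt τ < 1 := by
            have := Real.sqrt_lt_sqrt (le_of_lt hτ0) hτ1
            simpa using this
          have key : |w + Real.sqrt τ * (1 - w) - 1| = |w - 1| * (1 - Real.sqrt τ) := by
            have : w + Real.sqrt τ * (1 - w) - 1 = (w - 1) * (1 - Real.sqrt τ) := by ring
            rw [this, abs_mul,
              abs_of_pos (show (0:ℝ) < 1 - Real.sqrt τ by linarith)]
          have hnum : |w + Real.sqrt τ * (1 - w) - 1| - 1 ≤ -Real.sqrt τ := by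
            rw [key]
            nlinarith
          have hτeq : τ = Real.sqrt τ * Real.sqrt τ := (Real.mul_self_sqrt hτ0.le).symm
          rw [q6, div_le_iff₀ hτ0]
          calc |w + Real.sqrt τ * (1 - w) - 1| - 1 ≤ -Real.sqrt τ := hnum
            _ = -(Real.sqrt τ)⁻¹ * τ := by
                rw [hτeq]; field_simp; rw [Real.sqrt_sq hsτ0.le]
        have hinv : Tendsto (fun τ : ℝ => -(Real.sqrt τ)⁻¹) (𝓝[>] (0:ℝ)) atBot := by
          apply tendsto_neg_atBot_iff.2
          apply tendsto_inv_nhdsGT_zero.comp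
          rw [tendsto_nhdsWithin_iff]
          constructor
          · have := (Real.continuous_sqrt.tendsto 0).mono_left
              (nhdsWithin_le_nhds (s := Set.Ioi (0:ℝ)))
            simpa using this
          · filter_upwards [self_mem_nhdsWithin] with τ (hτ : 0 < τ)
            exact Real.sqrt_pos.2 hτ
        have hbot : Tendsto (fun τ => q6 τ (w + Real.sqrt τ * (1 - w)))
            (𝓝[>] (0:ℝ)) atBot := tendsto_atBot_mono' _ hbound hinv
        have : Tendsto (fun τ => ((q6 τ (w + Real.sqrt τ * (1 - w)) : ℝ) : EReal))
            (𝓝[>] (0:ℝ)) (𝓝 ⊥) := coe_tendsto_bot hbot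
        rw [this.limsup_eq]
        simp [g6, hw]
    · exact ⟨fun _ => w, tendsto_const_nhds, by simp [g6, hw]⟩
  · -- liminf inequality
    intro w φ hφ
    by_cases hw : w ∈ Set.Icc (0:ℝ) 2
    · simp [g6, hw]
    · have hw' := hw
      rw [Set.mem_Icc, not_and_or] at hw'
      have h1 : 1 < |w - 1| := by
        rcases hw' with h | h
        · rw [abs_sub_comm]
          calc 1 < 1 - w := by linarith [lt_of_not_ge h]
            _ ≤ |1 - w| := le_abs_self _
        · calc 1 < w - 1 := by linarith [lt_of_not_ge h]
            _ ≤ |w - 1| := le_abs_self _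
      set c : ℝ := (|w - 1| - 1) / 2 with hc
      have hcpos : 0 < c := by rw [hc]; linarith
      have habs : Tendsto (fun τ => |φ τ - 1|) (𝓝[>] (0:ℝ)) (𝓝 |w - 1|) :=
        (continuous_abs.tendsto (w - 1)).comp (hφ.sub_const 1)
      have hev : ∀ᶠ τ in 𝓝[>] (0:ℝ), c / τ ≤ q6 τ (φ τ) := by
        have hgt : ∀ᶠ τ in 𝓝[>] (0:ℝ), (|w - 1| + 1) / 2 < |φ τ - 1| :=
          habs.eventually (eventually_gt_nhds (by linarith))
        filter_upwards [hgt, self_mem_nhdsWithin] with τ hτ1 (hτ0 : 0 < τ)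
        rw [q6, div_le_div_iff_of_pos_right hτ0]
        rw [hc]; linarith
      have htop : Tendsto (fun τ => q6 τ (φ τ)) (𝓝[>] (0:ℝ)) atTop := by
        refine tendsto_atTop_mono' _ hev ?_
        have : Tendsto (fun τ : ℝ => c * τ⁻¹) (𝓝[>] (0:ℝ)) atTop :=
          Tendsto.const_mul_atTop hcpos tendsto_inv_nhdsGT_zero
        exact this.congr fun τ => (div_eq_mul_inv c τ).symm
      have : Tendsto (fun τ => ((q6 τ (φ τ) : ℝ) : EReal)) (𝓝[>] (0:ℝ)) (𝓝 ⊤) :=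
        coe_tendsto_top htop
      rw [this.liminf_eq]
      simp [g6, hw]
  · rintro ⟨h1, -⟩
    exact h1 0 (by simp [g6])
  · simp [g6]
end

section
/- Let f : ℝ₊ × ℝ → ℝ be defined by f(t,x) := |x − t²|, let x = 0 and v = 0 ∈ ∂f(0,·)(0). Then for every τ > 0 and w ∈ ℝ one has Δ²_τ f(0|0)(w) = (|w − τ| − τ)/τ, and the family (Δ²_τ f(0|0))_{τ>0} epi-converges as τ → 0 to the function g given by g(0) = −1 and g(w) = +∞ for w ≠ 0. In particular the second epi-derivative d²_e f(0|0) is proper, lower semi-continuous and convex, but d²_e f(0|0)(0) = −1 ≠ 0, so it is not positively homogeneous of degree two. -/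
open Filter Topology

/-- Convexity of an extended-real-valued function on ℝ. -/
def ConvexE (g : ℝ → EReal) : Prop :=
  ∀ x y : ℝ, ∀ a b : ℝ, 0 ≤ a → 0 ≤ b → a + b = 1 →
    g (a * x + b * y) ≤ (a : EReal) * g x + (b : EReal) * g y

/-- Second-order difference quotient of `f(t,x) = |x − t²|` at `x = 0` for `v = 0`. -/
noncomputable def q7 (τ w : ℝ) : ℝ := (|w - τ| - τ) / τ

/-- The epi-limit: `−1` at `0` and `+∞` elsewhere. -/
noncomputable def g7 : ℝ → EReal := fun w => if w = 0 then ((-1 : ℝ) : EReal) else ⊤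

lemma g7_lb (w : ℝ) : ((-1 : ℝ) : EReal) ≤ g7 w := by
  unfold g7
  split
  · exact le_refl _
  · exact le_top

lemma mul_g7_ne_bot {a : ℝ} (ha : 0 ≤ a) (x : ℝ) : (a : EReal) * g7 x ≠ ⊥ := by
  unfold g7
  split
  · rw [← EReal.coe_mul]; exact EReal.coe_ne_bot _
  · rcases eq_or_lt_of_le ha with h0 | h0
    · rw [← h0]; simp
    · rw [EReal.coe_mul_top_of_pos h0]; exact top_ne_bot

lemma q7_lb {τ : ℝ} (hτ : 0 < τ) (x : ℝ) : (-1 : ℝ) ≤ q7 τ x := by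
  unfold q7
  rw [le_div_iff₀ hτ]
  have := abs_nonneg (x - τ)
  nlinarith

theorem stmt7 :
    (∀ τ > (0:ℝ), ∀ w : ℝ,
      (|(0:ℝ) + τ * w - τ ^ 2| - |(0:ℝ) - τ ^ 2| - τ * (0 * w)) / τ ^ 2 = q7 τ w) ∧
    EpiConvTo q7 g7 ∧
    ProperE g7 ∧ LowerSemicontinuous g7 ∧ ConvexE g7 ∧
    g7 0 = ((-1 : ℝ) : EReal) ∧ g7 0 ≠ 0 ∧
    ¬ (∀ lam > (0:ℝ), ∀ w : ℝ, g7 (lam * w) = ((lam ^ 2 : ℝ) : EReal) * g7 w) := by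
  refine ⟨?_, ⟨?_, ?_⟩, ⟨?_, ?_⟩, ?_, ?_, ?_, ?_, ?_⟩
  · -- difference quotient formula
    intro τ hτ w
    have h0 : (0:ℝ) + τ * w - τ ^ 2 = τ * (w - τ) := by ring
    have h1 : |(0:ℝ) - τ ^ 2| = τ ^ 2 := by
      rw [abs_of_nonpos (by nlinarith)]; ring
    rw [h0, abs_mul, abs_of_pos hτ, h1, q7]
    field_simp
    ring
  · -- recovery sequences
    intro w
    by_cases hw : w = 0
    · subst hw
      refine ⟨id, tendsto_id.mono_right nhdsWithin_le_nhds, ?_⟩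
      have heq : ∀ᶠ τ in 𝓝[>] (0:ℝ),
          ((q7 τ (id τ) : ℝ) : EReal) = ((-1 : ℝ) : EReal) := by
        filter_upwards [self_mem_nhdsWithin] with τ (hτ : (0:ℝ) < τ)
        have : q7 τ τ = -1 := by
          unfold q7
          rw [sub_self, abs_zero, zero_sub, neg_div, div_self hτ.ne']
        simp [this]
      rw [limsup_congr heq, limsup_const]
      simp [g7]
    · exact ⟨fun _ => w, tendsto_const_nhds, by simp [g7, hw]⟩
  · -- liminf inequality
    intro w φ hφ
    by_cases hw : w = 0
    · subst hw
      have hg : g7 0 = ((-1 : ℝ) : EReal) := by simp [g7]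
      rw [hg]
      refine le_liminf_of_le (by isBoundedDefault) ?_
      filter_upwards [self_mem_nhdsWithin] with τ (hτ : (0:ℝ) < τ)
      exact_mod_cast EReal.coe_le_coe_iff.2 (q7_lb hτ (φ τ))
    · have hg : g7 w = ⊤ := if_neg hw
      rw [hg, top_le_iff]
      have htid : Tendsto (fun τ : ℝ => τ) (𝓝[>] (0:ℝ)) (𝓝 0) :=
        tendsto_id.mono_right nhdsWithin_le_nhds
      have hnum : Tendsto (fun τ => |φ τ - τ| - τ) (𝓝[>] (0:ℝ)) (𝓝 |w|) := by
        have := ((hφ.sub htid).abs).sub htid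
        simpa using this
      have hinv : Tendsto (fun τ : ℝ => τ⁻¹) (𝓝[>] (0:ℝ)) atTop :=
        tendsto_inv_nhdsGT_zero
      have habs : (0:ℝ) < |w| := abs_pos.2 hw
      have hq : Tendsto (fun τ => q7 τ (φ τ)) (𝓝[>] (0:ℝ)) atTop := by
        have := hnum.pos_mul_atTop habs hinv
        refine this.congr' ?_
        filter_upwards [self_mem_nhdsWithin] with τ (hτ : (0:ℝ) < τ)
        unfold q7
        rw [div_eq_mul_inv]
      have htend : Tendsto (fun τ => ((q7 τ (φ τ) : ℝ) : EReal)) (𝓝[>] (0:ℝ)) (𝓝 ⊤) := by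
        rw [EReal.tendsto_nhds_top_iff_real]
        intro x
        filter_upwards [hq.eventually_gt_atTop x] with τ hτ
        exact_mod_cast hτ
      exact htend.liminf_eq
  · -- proper: never ⊥
    intro w
    unfold g7
    split
    · exact EReal.coe_ne_bot _
    · exact top_ne_bot
  · exact ⟨0, by rw [show g7 0 = ((-1 : ℝ) : EReal) from if_pos rfl]; exact EReal.coe_ne_top _⟩
  · -- lower semicontinuous
    intro x y hy
    by_cases hx : x = 0
    · subst hx
      filter_upwards with z
      have : y < ((-1 : ℝ) : EReal) := by simpa [g7] using hy
      exact this.trans_le (g7_lb z)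
    · filter_upwards [eventually_ne_nhds hx] with z hz
      rw [g7]
      simp only [if_neg hz]
      exact lt_of_lt_of_le hy le_top
  · -- convex
    intro x y a b ha hb hab
    by_cases hx : x = 0
    · by_cases hy : y = 0
      · subst hx; subst hy
        simp only [mul_zero, add_zero]
        have hg : g7 0 = ((-1 : ℝ) : EReal) := by simp [g7]
        rw [hg, ← EReal.coe_mul, ← EReal.coe_mul, ← EReal.coe_add]
        rw [EReal.coe_le_coe_iff]
        nlinarith
      · rcases eq_or_lt_of_le hb with hb0 | hb0
        · have ha1 : a = 1 := by linarith
          subst hx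
          rw [← hb0, ha1]
          simp
        · have hgy : g7 y = ⊤ := if_neg hy
          rw [hgy, EReal.mul_top_of_pos (by exact_mod_cast hb0),
            EReal.add_top_of_ne_bot]
          · exact le_top
          · exact mul_g7_ne_bot ha x
    · rcases eq_or_lt_of_le ha with ha0 | ha0
      · have hb1 : b = 1 := by linarith
        have hgx : g7 x = ⊤ := if_neg hx
        rw [← ha0, hb1]
        simp
      · have hgx : g7 x = ⊤ := if_neg hx
        rw [hgx, EReal.mul_top_of_pos (by exact_mod_cast ha0), EReal.top_add_of_ne_bot]
        · exact le_top
        · exact mul_g7_ne_bot hb y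
  · simp [g7]
  · rw [show g7 0 = ((-1 : ℝ) : EReal) from if_pos rfl]
    norm_num
  · intro h
    have h2 := h 2 (by norm_num) 0
    rw [mul_zero, show g7 0 = ((-1 : ℝ) : EReal) from if_pos rfl,
      ← EReal.coe_mul, EReal.coe_eq_coe_iff] at h2
    norm_num at h2
end

section
/- Let H be a real Hilbert space, A : ℝ₊ × H → H a parameterized single-valued map and B : ℝ₊ × H ⇉ H a parameterized set-valued map. Let x ∈ H and v ∈ A(0,x) + B(0,x). If A is semi-differentiable at x, then A + B is proto-differentiable at x for v if and only if B is proto-differentiable at x for v − A(0,x), and in that case D_p(A+B)(x|v) = D_sA(x) + D_pB(x | v − A(0,x)). -/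
open Filter Topology

variable {H : Type*} [NormedAddCommGroup H] [InnerProductSpace ℝ H] [CompleteSpace H]

/-- Outer (Painlevé–Kuratowski) limit as τ → 0⁺ of a family of subsets of a
topological space. -/
def outerLim {X : Type*} [TopologicalSpace X] (S : ℝ → Set X) : Set X :=
  {x | ∃ t : ℕ → ℝ, (∀ n, 0 < t n) ∧ Tendsto t atTop (𝓝 0) ∧
    ∃ xs : ℕ → X, Tendsto xs atTop (𝓝 x) ∧ ∀ n, xs n ∈ S (t n)}

/-- Inner (Painlevé–Kuratowski) limit as τ → 0⁺ of a family of subsets of a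
topological space. -/
def innerLim {X : Type*} [TopologicalSpace X] (S : ℝ → Set X) : Set X :=
  {x | ∀ t : ℕ → ℝ, (∀ n, 0 < t n) → Tendsto t atTop (𝓝 0) →
    ∃ xs : ℕ → X, Tendsto xs atTop (𝓝 x) ∧ ∃ N : ℕ, ∀ n ≥ N, xs n ∈ S (t n)}

/-- Graph of the difference quotient `Δ_τ C(x|v)(w) = (C(τ, x+τw) − v)/τ`. -/
def grQuot (C : ℝ → H → Set H) (x v : H) (τ : ℝ) : Set (H × H) :=
  {p | v + τ • p.2 ∈ C τ (x + τ • p.1)}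

/-- `C` is proto-differentiable at `x` for `v`: the graphs of the difference quotients
Painlevé–Kuratowski converge as τ → 0⁺. -/
def ProtoDiffAt (C : ℝ → H → Set H) (x v : H) : Prop :=
  outerLim (grQuot C x v) ⊆ innerLim (grQuot C x v)

/-- The proto-derivative, as the set-valued map whose graph is the PK-limit of the
graphs of the difference quotients. -/
def protoDeriv (C : ℝ → H → Set H) (x v : H) : H → Set H :=
  fun w => {u | (w, u) ∈ outerLim (grQuot C x v)}

/-- The parameterized set-valued map `A + B`. -/
def sumMap (A : ℝ → H → H) (B : ℝ → H → Set H) : ℝ → H → Set H :=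
  fun t y => {u | u - A t y ∈ B t y}

omit [CompleteSpace H] in
lemma grQuot_shift (A : ℝ → H → H) (B : ℝ → H → Set H) (x v : H) {τ : ℝ} (hτ : τ ≠ 0)
    (p : H × H) :
    p ∈ grQuot (sumMap A B) x v τ ↔
      (p.1, p.2 - τ⁻¹ • (A τ (x + τ • p.1) - A 0 x)) ∈ grQuot B x (v - A 0 x) τ := by
  simp only [grQuot, sumMap, Set.mem_setOf_eq, smul_sub, smul_inv_smul₀ hτ]
  have : v - A 0 x + (τ • p.2 - (A τ (x + τ • p.1) - A 0 x))
      = v + τ • p.2 - A τ (x + τ • p.1) := by abel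
  rw [this]

theorem stmt12 (A : ℝ → H → H) (B : ℝ → H → Set H) (x v : H)
    (hv : v - A 0 x ∈ B 0 x) (DA : H → H)
    (hsemi : ∀ w : H,
      Tendsto (fun p : ℝ × H => (p.1)⁻¹ • (A p.1 (x + p.1 • p.2) - A 0 x))
        ((𝓝[>] (0:ℝ)) ×ˢ 𝓝 w) (𝓝 (DA w))) :
    (ProtoDiffAt (sumMap A B) x v ↔ ProtoDiffAt B x (v - A 0 x)) ∧
    (ProtoDiffAt B x (v - A 0 x) →
      ∀ w : H, protoDeriv (sumMap A B) x v w
        = {u : H | u - DA w ∈ protoDeriv B x (v - A 0 x) w}) := by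
  have hq : ∀ (w : H) (t : ℕ → ℝ) (ws : ℕ → H), (∀ n, 0 < t n) →
      Tendsto t atTop (𝓝 0) → Tendsto ws atTop (𝓝 w) →
      Tendsto (fun n => (t n)⁻¹ • (A (t n) (x + t n • ws n) - A 0 x)) atTop (𝓝 (DA w)) := by
    intro w t ws ht ht0 hws
    have h1 : Tendsto (fun n => (t n, ws n)) atTop ((𝓝[>] (0:ℝ)) ×ˢ 𝓝 w) :=
      Tendsto.prodMk
        (tendsto_nhdsWithin_of_tendsto_nhds_of_eventually_within t ht0
          (Eventually.of_forall ht)) hws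
    exact (hsemi w).comp h1
  have houter : ∀ p : H × H, p ∈ outerLim (grQuot (sumMap A B) x v) ↔
      (p.1, p.2 - DA p.1) ∈ outerLim (grQuot B x (v - A 0 x)) := by
    intro p
    constructor
    · rintro ⟨t, ht, ht0, xs, hxs, hmem⟩
      refine ⟨t, ht, ht0,
        fun n => ((xs n).1, (xs n).2 - (t n)⁻¹ • (A (t n) (x + t n • (xs n).1) - A 0 x)),
        ?_, fun n => (grQuot_shift A B x v (ht n).ne' (xs n)).mp (hmem n)⟩
      have h1 : Tendsto (fun n => (xs n).1) atTop (𝓝 p.1) := (continuous_fst.tendsto p).comp hxs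
      have h2 : Tendsto (fun n => (xs n).2) atTop (𝓝 p.2) := (continuous_snd.tendsto p).comp hxs
      have := h1.prodMk (h2.sub (hq p.1 t _ ht ht0 h1))
      rw [← nhds_prod_eq] at this
      exact this
    · rintro ⟨t, ht, ht0, xs, hxs, hmem⟩
      refine ⟨t, ht, ht0,
        fun n => ((xs n).1, (xs n).2 + (t n)⁻¹ • (A (t n) (x + t n • (xs n).1) - A 0 x)),
        ?_, fun n => ?_⟩
      · have h1 : Tendsto (fun n => (xs n).1) atTop (𝓝 p.1) :=
          (continuous_fst.tendsto (p.1, p.2 - DA p.1)).comp hxs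
        have h2 : Tendsto (fun n => (xs n).2) atTop (𝓝 (p.2 - DA p.1)) :=
          (continuous_snd.tendsto (p.1, p.2 - DA p.1)).comp hxs
        have := Tendsto.prodMk h1 (h2.add (hq p.1 t _ ht ht0 h1))
        rw [← nhds_prod_eq] at this
        simpa using this
      · rw [grQuot_shift A B x v (ht n).ne']
        simpa using hmem n
  have hinner : ∀ p : H × H, p ∈ innerLim (grQuot (sumMap A B) x v) ↔
      (p.1, p.2 - DA p.1) ∈ innerLim (grQuot B x (v - A 0 x)) := by
    intro p
    constructor
    · intro h t ht ht0
      obtain ⟨xs, hxs, N, hmem⟩ := h t ht ht0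
      refine ⟨fun n => ((xs n).1, (xs n).2 - (t n)⁻¹ • (A (t n) (x + t n • (xs n).1) - A 0 x)),
        ?_, N, fun n hn => (grQuot_shift A B x v (ht n).ne' (xs n)).mp (hmem n hn)⟩
      have h1 : Tendsto (fun n => (xs n).1) atTop (𝓝 p.1) := (continuous_fst.tendsto p).comp hxs
      have h2 : Tendsto (fun n => (xs n).2) atTop (𝓝 p.2) := (continuous_snd.tendsto p).comp hxs
      have := h1.prodMk (h2.sub (hq p.1 t _ ht ht0 h1))
      rw [← nhds_prod_eq] at this
      exact this
    · intro h t ht ht0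
      obtain ⟨xs, hxs, N, hmem⟩ := h t ht ht0
      refine ⟨fun n => ((xs n).1, (xs n).2 + (t n)⁻¹ • (A (t n) (x + t n • (xs n).1) - A 0 x)),
        ?_, N, fun n hn => ?_⟩
      · have h1 : Tendsto (fun n => (xs n).1) atTop (𝓝 p.1) :=
          (continuous_fst.tendsto (p.1, p.2 - DA p.1)).comp hxs
        have h2 : Tendsto (fun n => (xs n).2) atTop (𝓝 (p.2 - DA p.1)) :=
          (continuous_snd.tendsto (p.1, p.2 - DA p.1)).comp hxs
        have := Tendsto.prodMk h1 (h2.add (hq p.1 t _ ht ht0 h1))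
        rw [← nhds_prod_eq] at this
        simpa using this
      · rw [grQuot_shift A B x v (ht n).ne']
        simpa using hmem n hn
  constructor
  · constructor
    · intro h q hq'
      have hp : (q.1, q.2 + DA q.1) ∈ outerLim (grQuot (sumMap A B) x v) := by
        rw [houter]; simpa using hq'
      have := h hp
      rw [hinner] at this
      simpa using this
    · intro h p hp
      rw [hinner p]
      exact h ((houter p).mp hp)
  · intro _ w
    ext u
    exact houter (w, u)
end

section
/- Let f : ℝ₊ × ℝ → ℝ be defined by f(t,x) := a(t)|x − b(t)|, where a : ℝ₊ → ℝ is differentiable at 0 with a(t) > 0 for all t ≥ 0, and b : ℝ₊ → ℝ is twice differentiable at 0 with b'(0) = 0. Let x ∈ ℝ with x > b(0) and v = a(0) (so v ∈ ∂f(0,·)(x)). Then f is twice epi-differentiable at x for v and d²_e f(x|v)(w) = a'(0)·w for all w ∈ ℝ. -/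
open Filter Topology

lemma stmt15_key (a b : ℝ → ℝ) (a' : ℝ)
    (ha : HasDerivWithinAt a a' (Set.Ici 0) 0)
    (hbc : Tendsto b (𝓝[>] (0:ℝ)) (𝓝 (b 0)))
    (x : ℝ) (hx : b 0 < x) (w : ℝ) (φ : ℝ → ℝ)
    (hφ : Tendsto φ (𝓝[>] (0:ℝ)) (𝓝 w)) :
    Tendsto (fun τ => (a τ * |x + τ * φ τ - b τ| - a τ * |x - b τ| - τ * (a 0 * φ τ)) / τ ^ 2)
      (𝓝[>] (0:ℝ)) (𝓝 (a' * w)) := by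
  have hτ0 : Tendsto (fun τ : ℝ => τ) (𝓝[>] (0:ℝ)) (𝓝 0) :=
    tendsto_id.mono_left nhdsWithin_le_nhds
  have hslope : Tendsto (fun τ => (a τ - a 0) / τ) (𝓝[>] (0:ℝ)) (𝓝 a') := by
    have hs := hasDerivWithinAt_iff_tendsto_slope.mp ha
    rw [Set.Ici_sdiff_left] at hs
    refine hs.congr (fun τ => ?_)
    simp [slope_def_field, div_eq_div_iff]
  have h1 : Tendsto (fun τ => x + τ * φ τ - b τ) (𝓝[>] (0:ℝ)) (𝓝 (x - b 0)) := by
    have := ((tendsto_const_nhds : Tendsto (fun _ : ℝ => x) (𝓝[>] (0:ℝ)) (𝓝 x)).add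
      (hτ0.mul hφ)).sub hbc
    simpa using this
  have h2 : Tendsto (fun τ => x - b τ) (𝓝[>] (0:ℝ)) (𝓝 (x - b 0)) :=
    tendsto_const_nhds.sub hbc
  have hpos : (0:ℝ) < x - b 0 := by linarith
  have he1 : ∀ᶠ τ in 𝓝[>] (0:ℝ), 0 < x + τ * φ τ - b τ :=
    h1.eventually (eventually_gt_nhds hpos)
  have he2 : ∀ᶠ τ in 𝓝[>] (0:ℝ), 0 < x - b τ :=
    h2.eventually (eventually_gt_nhds hpos)
  have heτ : ∀ᶠ τ in 𝓝[>] (0:ℝ), (0:ℝ) < τ := eventually_mem_nhdsWithin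
  have heq : ∀ᶠ τ in 𝓝[>] (0:ℝ),
      ((a τ - a 0) / τ) * φ τ
        = (a τ * |x + τ * φ τ - b τ| - a τ * |x - b τ| - τ * (a 0 * φ τ)) / τ ^ 2 := by
    filter_upwards [he1, he2, heτ] with τ h1 h2 hτ
    rw [abs_of_pos h1, abs_of_pos h2]
    field_simp
    ring
  exact (hslope.mul hφ).congr' heq

theorem stmt15 (a b b₁ : ℝ → ℝ) (a' b'' : ℝ)
    (ha : HasDerivWithinAt a a' (Set.Ici 0) 0)
    (hapos : ∀ t ≥ (0:ℝ), 0 < a t)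
    (hb1 : ∀ᶠ t in 𝓝[≥] (0:ℝ), HasDerivWithinAt b (b₁ t) (Set.Ici 0) t)
    (hb2 : HasDerivWithinAt b₁ b'' (Set.Ici 0) 0)
    (hb10 : b₁ 0 = 0)
    (x : ℝ) (hx : b 0 < x) :
    EpiConvTo
      (fun τ w => (a τ * |x + τ * w - b τ| - a τ * |x - b τ| - τ * (a 0 * w)) / τ ^ 2)
      (fun w => ((a' * w : ℝ) : EReal)) := by
  have hb0 : HasDerivWithinAt b (b₁ 0) (Set.Ici 0) 0 :=
    hb1.self_of_nhdsWithin (Set.self_mem_Ici)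
  have hbc : Tendsto b (𝓝[>] (0:ℝ)) (𝓝 (b 0)) :=
    hb0.continuousWithinAt.mono_left (nhdsWithin_mono _ Set.Ioi_subset_Ici_self)
  constructor
  · intro w
    refine ⟨fun _ => w, tendsto_const_nhds, ?_⟩
    have h := stmt15_key a b a' ha hbc x hx w (fun _ => w) tendsto_const_nhds
    have h' : Tendsto (fun τ => ((((a τ * |x + τ * w - b τ| - a τ * |x - b τ| - τ * (a 0 * w)) / τ ^ 2 : ℝ)) : EReal))
        (𝓝[>] (0:ℝ)) (𝓝 ((a' * w : ℝ) : EReal)) := EReal.tendsto_coe.mpr h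
    exact le_of_eq h'.limsup_eq
  · intro w φ hφ
    have h := stmt15_key a b a' ha hbc x hx w φ hφ
    have h' : Tendsto (fun τ => ((((a τ * |x + τ * φ τ - b τ| - a τ * |x - b τ| - τ * (a 0 * φ τ)) / τ ^ 2 : ℝ)) : EReal))
        (𝓝[>] (0:ℝ)) (𝓝 ((a' * w : ℝ) : EReal)) := EReal.tendsto_coe.mpr h
    exact le_of_eq h'.liminf_eq.symm
end

section
/- Let f : ℝ₊ × ℝ → ℝ be defined by f(t,x) := a(t)|x − b(t)|, where a : ℝ₊ → ℝ is differentiable at 0 with a(t) > 0 for all t ≥ 0, and b : ℝ₊ → ℝ is twice differentiable at 0 with b'(0) = 0. Let x = b(0) and v ∈ (−a(0), a(0)) (so v ∈ ∂f(0,·)(x)). Then f is twice epi-differentiable at x for v with d²_e f(x|v)(0) = ((a(0)−v)/2)·b''(0) − a(0)·max(b''(0), 0) and d²_e f(x|v)(w) = +∞ for w ≠ 0. In particular d²_e f(x|v) is proper, lower semi-continuous and convex. -/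
open Filter Topology

lemma aux_quad (b b₁ : ℝ → ℝ) (b'' : ℝ)
    (hb1 : ∀ᶠ t in 𝓝[≥] (0:ℝ), HasDerivWithinAt b (b₁ t) (Set.Ici 0) t)
    (hb2 : HasDerivWithinAt b₁ b'' (Set.Ici 0) 0)
    (hb10 : b₁ 0 = 0) :
    Tendsto (fun τ => (b τ - b 0) / τ ^ 2) (𝓝[>] (0:ℝ)) (𝓝 (b'' / 2)) := by
  obtain ⟨δ, hδ, hδsub⟩ := mem_nhdsGE_iff_exists_Ico_subset.mp hb1
  have hδ0 : (0:ℝ) < δ := hδ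
  have hderiv : ∀ x ∈ Set.Ioo (0:ℝ) δ, HasDerivAt (fun t => b t - b 0) (b₁ x) x := by
    intro x hx
    have h1 : HasDerivWithinAt b (b₁ x) (Set.Ici 0) x := hδsub ⟨hx.1.le, hx.2⟩
    have h2 : HasDerivAt b (b₁ x) x := h1.hasDerivAt (Ici_mem_nhds hx.1)
    simpa using h2.sub_const (b 0)
  have hg : ∀ x ∈ Set.Ioo (0:ℝ) δ, HasDerivAt (fun t : ℝ => t ^ 2) (2 * x) x := by
    intro x _
    simpa [mul_comm] using hasDerivAt_pow 2 x
  have hgne : ∀ x ∈ Set.Ioo (0:ℝ) δ, (2 : ℝ) * x ≠ 0 := fun x hx => by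
    have := hx.1; positivity
  have hb0 : HasDerivWithinAt b (b₁ 0) (Set.Ici 0) 0 :=
    hb1.self_of_nhdsWithin Set.self_mem_Ici
  have hbc : Tendsto (fun t => b t - b 0) (𝓝[>] (0:ℝ)) (𝓝 0) := by
    have := (hb0.continuousWithinAt.tendsto).mono_left
      (nhdsWithin_mono 0 Set.Ioi_subset_Ici_self)
    simpa using this.sub_const (b 0)
  have hgc : Tendsto (fun t : ℝ => t ^ 2) (𝓝[>] (0:ℝ)) (𝓝 0) := by
    have : Tendsto (fun t : ℝ => t ^ 2) (𝓝 (0:ℝ)) (𝓝 ((0:ℝ) ^ 2)) :=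
      (continuous_pow 2).tendsto 0
    simpa using this.mono_left nhdsWithin_le_nhds
  have hslope : Tendsto (fun x => b₁ x / x) (𝓝[>] (0:ℝ)) (𝓝 b'') := by
    have h := hasDerivWithinAt_iff_tendsto_slope.mp hb2
    have hle : 𝓝[>] (0:ℝ) ≤ 𝓝[Set.Ici 0 \ {0}] (0:ℝ) := by
      apply nhdsWithin_mono
      intro x hx
      exact ⟨Set.mem_Ici.mpr (le_of_lt (Set.mem_Ioi.mp hx)), fun h => ne_of_gt (Set.mem_Ioi.mp hx) (Set.mem_singleton_iff.mp h)⟩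
    refine (h.mono_left hle).congr' ?_
    filter_upwards [self_mem_nhdsWithin] with x hx
    simp [slope_def_field, div_eq_iff (ne_of_gt (Set.mem_Ioi.mp hx : (0:ℝ) < x)), hb10]
  have hdiv : Tendsto (fun x => b₁ x / (2 * x)) (𝓝[>] (0:ℝ)) (𝓝 (b'' / 2)) := by
    refine (hslope.div_const 2).congr' ?_
    filter_upwards [self_mem_nhdsWithin] with x hx
    rw [div_div, mul_comm]
  exact HasDerivAt.lhopital_zero_right_on_Ioo hδ0 hderiv hg hgne hbc hgc hdiv

lemma auxLSC (g0 : ℝ) :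
    LowerSemicontinuous (fun w : ℕ => if w = 0 then ((g0:ℝ):EReal) else ⊤) := by
  intro x y hy
  rw [nhds_discrete ℕ]
  exact eventually_pure.mpr hy

lemma auxNeBot (g0 : ℝ) (w : ℝ) : (if w = 0 then ((g0:ℝ):EReal) else ⊤) ≠ ⊥ := by
  by_cases hw : w = 0 <;> simp [hw]

lemma auxMulNeBot (d : ℝ) (hd : 0 ≤ d) (z : EReal) (hz : z ≠ ⊥) : (d : EReal) * z ≠ ⊥ := by
  rcases hd.eq_or_lt with h | h
  · rw [← h]; simp
  · induction z using EReal.rec with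
    | bot => exact absurd rfl hz
    | coe r => simp [← EReal.coe_mul]
    | top => rw [EReal.coe_mul_top_of_pos h]; simp

lemma auxConvex (g0 : ℝ) :
    ConvexE (fun w : ℝ => if w = 0 then ((g0:ℝ):EReal) else ⊤) := by
  intro x y c d hc hd hcd
  by_cases hx : x = 0
  · by_cases hy : y = 0
    · subst hx; subst hy
      simp only [mul_zero, add_zero, if_pos rfl, if_true]
      rw [← EReal.coe_mul, ← EReal.coe_mul, ← EReal.coe_add]
      refine EReal.coe_le_coe_iff.mpr (le_of_eq ?_)
      rw [← add_mul, hcd, one_mul]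
    · rcases hd.eq_or_lt with h | h
      · have hc1 : c = 1 := by linarith
        subst hx
        simp only [if_neg hy, ← h, hc1, mul_zero, zero_add, zero_mul]
        simp
      · refine le_trans le_top (le_of_eq ?_)
        simp only [if_neg hy]
        rw [add_comm, EReal.coe_mul_top_of_pos h, EReal.top_add_of_ne_bot]
        exact auxMulNeBot c hc _ (auxNeBot g0 x)
  · rcases hc.eq_or_lt with h | h
    · have hd1 : d = 1 := by linarith
      simp only [if_neg hx, ← h, hd1, zero_mul, zero_add, one_mul]
      simp
    · refine le_trans le_top (le_of_eq ?_)
      simp only [if_neg hx]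
      rw [EReal.coe_mul_top_of_pos h, EReal.top_add_of_ne_bot]
      exact auxMulNeBot d hd _ (auxNeBot g0 y)

theorem stmt16 (a b b₁ : ℝ → ℝ) (a' b'' : ℝ)
    (ha : HasDerivWithinAt a a' (Set.Ici 0) 0)
    (hapos : ∀ t ≥ (0:ℝ), 0 < a t)
    (hb1 : ∀ᶠ t in 𝓝[≥] (0:ℝ), HasDerivWithinAt b (b₁ t) (Set.Ici 0) t)
    (hb2 : HasDerivWithinAt b₁ b'' (Set.Ici 0) 0)
    (hb10 : b₁ 0 = 0)
    (v : ℝ) (hv₁ : -a 0 < v) (hv₂ : v < a 0) :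
    EpiConvTo
      (fun τ w =>
        (a τ * |b 0 + τ * w - b τ| - a τ * |b 0 - b τ| - τ * (v * w)) / τ ^ 2)
      (fun w => if w = 0
        then (((a 0 - v) / 2 * b'' - a 0 * max b'' 0 : ℝ) : EReal) else ⊤) ∧
    ProperE (fun w => if w = 0
        then (((a 0 - v) / 2 * b'' - a 0 * max b'' 0 : ℝ) : EReal) else ⊤) ∧
    LowerSemicontinuous (fun w => if w = 0
        then (((a 0 - v) / 2 * b'' - a 0 * max b'' 0 : ℝ) : EReal) else ⊤) ∧
    ConvexE (fun w => if w = 0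
        then (((a 0 - v) / 2 * b'' - a 0 * max b'' 0 : ℝ) : EReal) else ⊤) := by
  have hvabs : |v| < a 0 := abs_lt.mpr ⟨hv₁, hv₂⟩
  have hC : Tendsto (fun τ => (b τ - b 0) / τ ^ 2) (𝓝[>] (0:ℝ)) (𝓝 (b'' / 2)) :=
    aux_quad b b₁ b'' hb1 hb2 hb10
  have hA : Tendsto a (𝓝[>] (0:ℝ)) (𝓝 (a 0)) :=
    (ha.continuousWithinAt.tendsto).mono_left (nhdsWithin_mono 0 Set.Ioi_subset_Ici_self)
  have hpos : ∀ᶠ τ in 𝓝[>] (0:ℝ), (0:ℝ) < τ := self_mem_nhdsWithin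
  have hva : ∀ᶠ τ in 𝓝[>] (0:ℝ), |v| < a τ := hA.eventually (eventually_gt_nhds hvabs)
  set g0 : ℝ := (a 0 - v) / 2 * b'' - a 0 * max b'' 0 with hg0def
  set F : ℝ → ℝ → ℝ := fun τ w =>
    (a τ * |b 0 + τ * w - b τ| - a τ * |b 0 - b τ| - τ * (v * w)) / τ ^ 2 with hFdef
  set Lf : ℝ → ℝ := fun τ => (-(a τ * |b τ - b 0|) - v * (b τ - b 0)) / τ ^ 2 with hLfdef
  have hg0val : -(a 0 * |b'' / 2|) - v * (b'' / 2) = g0 := by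
    rcases le_total 0 b'' with h | h
    · rw [abs_of_nonneg (by linarith : (0:ℝ) ≤ b'' / 2), hg0def, max_eq_left h]; ring
    · rw [abs_of_nonpos (by linarith : b'' / 2 ≤ 0), hg0def, max_eq_right h]; ring
  have hLtend : Tendsto Lf (𝓝[>] (0:ℝ)) (𝓝 g0) := by
    have h1 : Tendsto (fun τ => -(a τ * |(b τ - b 0) / τ ^ 2|) - v * ((b τ - b 0) / τ ^ 2))
        (𝓝[>] (0:ℝ)) (𝓝 (-(a 0 * |b'' / 2|) - v * (b'' / 2))) :=
      ((hA.mul hC.abs).neg).sub (hC.const_mul v)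
    rw [hg0val] at h1
    refine h1.congr' ?_
    filter_upwards [hpos] with τ hτ
    have hτ2 : (0:ℝ) < τ ^ 2 := by positivity
    rw [hLfdef]
    beta_reduce
    rw [abs_div, abs_of_pos hτ2]
    field_simp
  have hFeq : ∀ᶠ τ in 𝓝[>] (0:ℝ), F τ ((b τ - b 0) / τ) = Lf τ := by
    filter_upwards [hpos] with τ hτ
    have hτ0 : τ ≠ 0 := ne_of_gt hτ
    rw [hFdef, hLfdef]
    beta_reduce
    have h1 : b 0 + τ * ((b τ - b 0) / τ) - b τ = 0 := by field_simp; ring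
    have h2 : τ * (v * ((b τ - b 0) / τ)) = v * (b τ - b 0) := by field_simp
    rw [h1, h2, abs_zero, abs_sub_comm (b 0) (b τ)]
    ring_nf
  have hlow : ∀ᶠ τ in 𝓝[>] (0:ℝ), ∀ w : ℝ, Lf τ ≤ F τ w := by
    filter_upwards [hpos, hva] with τ hτ hvaτ w
    have hτ2 : (0:ℝ) < τ ^ 2 := by positivity
    rw [hFdef, hLfdef]
    beta_reduce
    rw [div_le_div_iff_of_pos_right hτ2]
    have e1 : b 0 + τ * w - b τ = τ * w - (b τ - b 0) := by ring
    rw [e1, abs_sub_comm (b 0) (b τ)]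
    have h1 : v * (τ * w - (b τ - b 0)) ≤ |v| * |τ * w - (b τ - b 0)| := by
      calc v * (τ * w - (b τ - b 0)) ≤ |v * (τ * w - (b τ - b 0))| := le_abs_self _
        _ = |v| * |τ * w - (b τ - b 0)| := abs_mul _ _
    have h2 : |v| * |τ * w - (b τ - b 0)| ≤ a τ * |τ * w - (b τ - b 0)| :=
      mul_le_mul_of_nonneg_right hvaτ.le (abs_nonneg _)
    nlinarith [abs_nonneg (τ * w - (b τ - b 0))]
  have hcoeL : Tendsto (fun τ => ((Lf τ : ℝ) : EReal)) (𝓝[>] (0:ℝ)) (𝓝 ((g0 : ℝ) : EReal)) :=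
    EReal.tendsto_coe.mpr hLtend
  have hliminfL : Filter.liminf (fun τ => ((Lf τ : ℝ) : EReal)) (𝓝[>] (0:ℝ)) = ((g0:ℝ):EReal) :=
    hcoeL.liminf_eq
  have hlimsupL : Filter.limsup (fun τ => ((Lf τ : ℝ) : EReal)) (𝓝[>] (0:ℝ)) = ((g0:ℝ):EReal) :=
    hcoeL.limsup_eq
  refine ⟨⟨?_, ?_⟩, ⟨fun w => auxNeBot g0 w, ⟨0, by simp⟩⟩, auxLSC g0, auxConvex g0⟩
  · -- limsup part
    intro w
    by_cases hw : w = 0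
    · subst hw
      refine ⟨fun τ => (b τ - b 0) / τ, ?_, ?_⟩
      · have h1 : Tendsto (fun τ => ((b τ - b 0) / τ ^ 2) * τ) (𝓝[>] (0:ℝ)) (𝓝 (b'' / 2 * 0)) :=
          hC.mul (tendsto_id.mono_right nhdsWithin_le_nhds)
        rw [mul_zero] at h1
        refine h1.congr' ?_
        filter_upwards [hpos] with τ hτ
        have : τ ≠ 0 := ne_of_gt hτ
        field_simp
      · have heq : Filter.limsup (fun τ => ((F τ ((b τ - b 0) / τ) : ℝ) : EReal)) (𝓝[>] (0:ℝ))
            = ((g0:ℝ):EReal) := by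
          rw [← hlimsupL]
          apply Filter.limsup_congr
          filter_upwards [hFeq] with τ hτ
          rw [hτ]
        rw [heq]
        simp
    · exact ⟨fun _ => w, tendsto_const_nhds, by simp [hw]⟩
  · -- liminf part
    intro w φ hφ
    by_cases hw : w = 0
    · subst hw
      have h1 : Filter.liminf (fun τ => ((Lf τ : ℝ) : EReal)) (𝓝[>] (0:ℝ)) ≤
          Filter.liminf (fun τ => ((F τ (φ τ) : ℝ) : EReal)) (𝓝[>] (0:ℝ)) :=
        Filter.liminf_le_liminf (by
          filter_upwards [hlow] with τ hτ
          exact EReal.coe_le_coe_iff.mpr (hτ (φ τ)))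
      rw [hliminfL] at h1
      simpa using h1
    · -- w ≠ 0 : F blows up along φ
      simp only [if_neg hw]
      have hwpos : 0 < (a 0 - |v|) * |w| := by
        have : 0 < |w| := abs_pos.mpr hw
        have : 0 < a 0 - |v| := by linarith
        positivity
      have hP : Tendsto (fun τ => (a τ - |v|) * |φ τ|) (𝓝[>] (0:ℝ))
          (𝓝 ((a 0 - |v|) * |w|)) := (hA.sub_const |v|).mul hφ.abs
      have hPtop : Tendsto (fun τ => ((a τ - |v|) * |φ τ|) * τ⁻¹) (𝓝[>] (0:ℝ)) atTop :=
        hP.pos_mul_atTop hwpos tendsto_inv_nhdsGT_zero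
      have hQ : Tendsto (fun τ => -(2 * (a τ * |(b τ - b 0) / τ ^ 2|))) (𝓝[>] (0:ℝ))
          (𝓝 (-(2 * (a 0 * |b'' / 2|)))) := ((hA.mul hC.abs).const_mul 2).neg
      have hMtop : Tendsto (fun τ => ((a τ - |v|) * |φ τ|) * τ⁻¹
          - 2 * (a τ * |(b τ - b 0) / τ ^ 2|)) (𝓝[>] (0:ℝ)) atTop := by
        have := hPtop.atTop_add hQ
        simpa [sub_eq_add_neg] using this
      have hFlow : ∀ᶠ τ in 𝓝[>] (0:ℝ),
          ((a τ - |v|) * |φ τ|) * τ⁻¹ - 2 * (a τ * |(b τ - b 0) / τ ^ 2|) ≤ F τ (φ τ) := by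
        filter_upwards [hpos, hva] with τ hτ hvaτ
        have hτ2 : (0:ℝ) < τ ^ 2 := by positivity
        have habsd : |(b τ - b 0) / τ ^ 2| = |b τ - b 0| / τ ^ 2 := by
          rw [abs_div, abs_of_pos hτ2]
        have hlhs : ((a τ - |v|) * |φ τ|) * τ⁻¹ - 2 * (a τ * |(b τ - b 0) / τ ^ 2|)
            = ((a τ - |v|) * (τ * |φ τ|) - 2 * (a τ * |b τ - b 0|)) / τ ^ 2 := by
          rw [habsd]
          field_simp
        rw [hlhs, hFdef]
        beta_reduce
        rw [div_le_div_iff_of_pos_right hτ2]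
        have e1 : b 0 + τ * φ τ - b τ = τ * φ τ - (b τ - b 0) := by ring
        rw [e1, abs_sub_comm (b 0) (b τ)]
        have habs1 : |τ * φ τ| = τ * |φ τ| := by
          rw [abs_mul, abs_of_pos hτ]
        have h1 : τ * |φ τ| - |b τ - b 0| ≤ |τ * φ τ - (b τ - b 0)| := by
          rw [← habs1]; exact abs_sub_abs_le_abs_sub _ _
        have h2 : τ * (v * φ τ) ≤ |v| * (τ * |φ τ|) := by
          have hle := le_abs_self (τ * (v * φ τ))
          have e : |τ * (v * φ τ)| = |v| * (τ * |φ τ|) := by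
            rw [abs_mul, abs_mul, abs_of_pos hτ]; ring
          linarith [e ▸ hle]
        have h3 : a τ * (τ * |φ τ| - |b τ - b 0|) ≤ a τ * |τ * φ τ - (b τ - b 0)| :=
          mul_le_mul_of_nonneg_left h1 (by linarith [abs_nonneg v] : (0:ℝ) ≤ a τ)
        nlinarith
      have hFtop : Tendsto (fun τ => F τ (φ τ)) (𝓝[>] (0:ℝ)) atTop :=
        tendsto_atTop_mono' _ hFlow hMtop
      have hcoetop : Tendsto (fun τ => ((F τ (φ τ) : ℝ) : EReal)) (𝓝[>] (0:ℝ)) (𝓝 ⊤) := by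
        rw [EReal.tendsto_nhds_top_iff_real]
        intro x
        filter_upwards [hFtop.eventually (eventually_ge_atTop (x + 1))] with τ hτ
        exact EReal.coe_lt_coe_iff.mpr (by linarith)
      rw [hcoetop.liminf_eq]
end

section
/- Let H be a real Hilbert space, f : H → ℝ ∪ {+∞} proper lower semi-continuous convex, x ∈ H with f(x) ∈ ℝ, and v ∈ ∂f(x). Then for every τ > 0 the conjugate of the second-order difference quotient satisfies (Δ²_τ f(x|v))* = Δ²_τ f*(v|x), where Δ²_τ f(x|v)(w) := (f(x+τw) − f(x) − τ⟨v,w⟩)/τ² and Δ²_τ f*(v|x)(u) := (f*(v+τu) − f*(v) − τ⟨x,u⟩)/τ². -/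
open Filter Topology
open scoped RealInnerProductSpace

variable {H : Type*} [NormedAddCommGroup H] [InnerProductSpace ℝ H] [CompleteSpace H]

/-- Convex subdifferential of an extended-real-valued function. -/
def Subdiff (f : H → EReal) (y : H) : Set H :=
  {v | ∀ z : H, (↑(⟪v, z - y⟫) : EReal) + f y ≤ f z}

/-- `f` is proper: it never takes the value `⊥` and is not identically `⊤`. -/
def ProperFun (f : H → EReal) : Prop := (∀ y, f y ≠ ⊥) ∧ ∃ y, f y ≠ ⊤

/-- Convexity of an extended-real-valued function. -/
def ConvexEFun (f : H → EReal) : Prop :=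
  ∀ x y : H, ∀ a b : ℝ, 0 ≤ a → 0 ≤ b → a + b = 1 →
    f (a • x + b • y) ≤ (a : EReal) * f x + (b : EReal) * f y

/-- Fenchel conjugate of an extended-real-valued function. -/
noncomputable def conjE (f : H → EReal) (u : H) : EReal :=
  ⨆ y : H, ((⟪u, y⟫ : ℝ) : EReal) - f y

private lemma iSup_sub_real {ι : Type*} [Nonempty ι] (a : ι → EReal) (c : ℝ) :
    (⨆ i, a i - (c : EReal)) = (⨆ i, a i) - (c : EReal) := by
  apply le_antisymm
  · exact iSup_le fun i => EReal.sub_le_sub (le_iSup a i) le_rfl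
  · rw [EReal.sub_le_iff_le_add (.inl (EReal.coe_ne_bot c)) (.inl (EReal.coe_ne_top c))]
    refine iSup_le fun i => ?_
    have : a i = (a i - (c : EReal)) + (c : EReal) := (EReal.sub_add_cancel).symm
    rw [this]
    exact add_le_add_left (le_iSup (fun i => a i - (c:EReal)) i) _

private lemma mul_iSup_real {ι : Type*} [Nonempty ι] (a : ι → EReal) {c : ℝ} (hc : 0 < c) :
    (c : EReal) * (⨆ i, a i) = ⨆ i, (c : EReal) * a i := by
  apply le_antisymm
  · have h1 : (⨆ i, a i) ≤ ((c⁻¹ : ℝ) : EReal) * ⨆ i, (c : EReal) * a i := by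
      refine iSup_le fun i => ?_
      have : a i = ((c⁻¹ : ℝ) : EReal) * ((c : EReal) * a i) := by
        rw [← mul_assoc, ← EReal.coe_mul, inv_mul_cancel₀ hc.ne', EReal.coe_one, one_mul]
      rw [this]
      exact mul_le_mul_of_nonneg_left (le_iSup (fun i => (c:EReal) * a i) i)
        (by exact_mod_cast (inv_nonneg.2 hc.le))
    calc (c : EReal) * (⨆ i, a i)
        ≤ (c : EReal) * (((c⁻¹ : ℝ) : EReal) * ⨆ i, (c : EReal) * a i) :=
          mul_le_mul_of_nonneg_left h1 (by exact_mod_cast hc.le)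
      _ = ⨆ i, (c : EReal) * a i := by
          rw [← mul_assoc, ← EReal.coe_mul, mul_inv_cancel₀ hc.ne', EReal.coe_one, one_mul]
  · exact iSup_le fun i =>
      mul_le_mul_of_nonneg_left (le_iSup a i) (by exact_mod_cast hc.le)

private lemma ereal_trich (e : EReal) (hb : e ≠ ⊥) : e = ⊤ ∨ ∃ a : ℝ, e = ↑a := by
  induction e using EReal.rec with
  | bot => exact absurd rfl hb
  | top => exact Or.inl rfl
  | coe a => exact Or.inr ⟨a, rfl⟩

theorem stmt17 (f : H → EReal) (hproper : ProperFun f)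
    (hlsc : LowerSemicontinuous f) (hconv : ConvexEFun f)
    (x : H) (r : ℝ) (hx : f x = ↑r) (v : H) (hv : v ∈ Subdiff f x) :
    conjE f v = ↑(⟪v, x⟫ - r) ∧
    ∀ τ > (0:ℝ), ∀ u : H,
      conjE (fun w => (((τ ^ 2)⁻¹ : ℝ) : EReal) * (f (x + τ • w) - ↑(r + τ * ⟪v, w⟫))) u
        = (((τ ^ 2)⁻¹ : ℝ) : EReal) *
            (conjE f (v + τ • u) - ↑((⟪v, x⟫ - r) + τ * ⟪x, u⟫)) := by
  constructor
  · -- first part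
    apply le_antisymm
    · refine iSup_le fun y => ?_
      have hy := hv y
      rw [hx] at hy
      rcases ereal_trich (f y) (hproper.1 y) with htop | ⟨a, ha⟩
      · simp [htop, EReal.sub_top]
      · rw [ha] at hy ⊢
        have hy' : ⟪v, y - x⟫ + r ≤ a := by exact_mod_cast hy
        rw [inner_sub_right] at hy'
        have : ⟪v, y⟫ - a ≤ ⟪v, x⟫ - r := by linarith
        exact_mod_cast this
    · have := le_iSup (fun y => ((⟪v, y⟫ : ℝ) : EReal) - f y) x
      rwa [hx, ← EReal.coe_sub] at this
  · intro τ hτ u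
    have ht : (0:ℝ) < (τ ^ 2)⁻¹ := by positivity
    set c : ℝ := (⟪v, x⟫ - r) + τ * ⟪x, u⟫ with hc
    have key : ∀ w : H,
        ((⟪u, w⟫ : ℝ) : EReal) -
            (((τ ^ 2)⁻¹ : ℝ) : EReal) * (f (x + τ • w) - ↑(r + τ * ⟪v, w⟫))
          = (((τ ^ 2)⁻¹ : ℝ) : EReal) *
              ((((⟪v + τ • u, x + τ • w⟫ : ℝ) : EReal) - f (x + τ • w)) - (c : EReal)) := by
      intro w
      rcases ereal_trich (f (x + τ • w)) (hproper.1 (x + τ • w)) with htop | ⟨a, ha⟩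
      · rw [htop, EReal.top_sub_coe, EReal.coe_mul_top_of_pos ht, EReal.sub_top,
          show ((⟪v + τ • u, x + τ • w⟫ : ℝ) : EReal) - ⊤ = ⊥ from EReal.sub_top _,
          EReal.bot_sub, EReal.coe_mul_bot_of_pos ht]
      · rw [ha, ← EReal.coe_sub, ← EReal.coe_mul, ← EReal.coe_sub, ← EReal.coe_sub,
          ← EReal.coe_sub, ← EReal.coe_mul, EReal.coe_eq_coe_iff]
        have hip : ⟪v + τ • u, x + τ • w⟫ =
            ⟪v, x⟫ + τ * ⟪v, w⟫ + τ * ⟪u, x⟫ + τ^2 * ⟪u, w⟫ := by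
          simp [inner_add_left, inner_add_right, real_inner_smul_left, real_inner_smul_right]
          ring
        have hxu : ⟪x, u⟫ = ⟪u, x⟫ := real_inner_comm u x
        rw [hip, hc, hxu]
        have hτ2 : (τ:ℝ)^2 ≠ 0 := by positivity
        field_simp
        ring
    unfold conjE
    rw [iSup_congr key, ← mul_iSup_real _ ht]
    congr 1
    have hre : (⨆ w : H, ((((⟪v + τ • u, x + τ • w⟫ : ℝ) : EReal) - f (x + τ • w)) - (c : EReal)))
        = ⨆ y : H, (((⟪v + τ • u, y⟫ : ℝ) : EReal) - f y) - (c : EReal) :=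
      Equiv.iSup_comp (g := fun y => (((⟪v + τ • u, y⟫ : ℝ) : EReal) - f y) - (c : EReal))
        ⟨fun w => x + τ • w, fun y => τ⁻¹ • (y - x),
          fun w => by simp [smul_smul, inv_mul_cancel₀ hτ.ne'],
          fun y => by simp [smul_smul, mul_inv_cancel₀ hτ.ne']⟩
    rw [hre, iSup_sub_real (fun y => ((⟪v + τ • u, y⟫ : ℝ) : EReal) - f y) c]
end

section
/- Let H be a real Hilbert space, f : ℝ₊ × H → ℝ ∪ {+∞} with f(t,·) proper lsc convex for each t, x ∈ H with f(t,x) ∈ ℝ for all t ≥ 0, and v ∈ ∂f(0,·)(x). Define Φ(t) := f*(t,v) + f(t,x) − ⟨v,x⟩ ≥ 0, where f*(t,·) is the Fenchel conjugate of f(t,·). Then for all τ > 0 the conjugate of the second-order difference quotient satisfies (Δ²_τ f(x|v))* = Δ²_τ f*(v|x) + Φ(τ)/τ², where Δ²_τ f(x|v)(w) := (f(τ,x+τw) − f(τ,x) − τ⟨v,w⟩)/τ² and Δ²_τ f*(v|x)(u) := (f*(τ,v+τu) − f*(τ,v) − τ⟨x,u⟩)/τ². -/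
open Filter Topology
open scoped RealInnerProductSpace

variable {H : Type*} [NormedAddCommGroup H] [InnerProductSpace ℝ H] [CompleteSpace H]

lemma ereal_ne_bot_cases (b : EReal) (h : b ≠ ⊥) : b = ⊤ ∨ ∃ a : ℝ, b = (a : EReal) := by
  induction b with
  | bot => exact absurd rfl h
  | coe a => exact Or.inr ⟨a, rfl⟩
  | top => exact Or.inl rfl

lemma strictMono_coe_mul {c : ℝ} (hc : 0 < c) :
    StrictMono (fun a : EReal => (c : EReal) * a) := by
  have key : (fun a : EReal => (c : EReal) * a) = fun a => a / ((c⁻¹ : ℝ) : EReal) := by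
    funext a
    rw [div_eq_mul_inv, EReal.coe_inv,
      EReal.inv_inv (EReal.coe_ne_bot c) (EReal.coe_ne_top c), mul_comm]
  rw [key]
  exact EReal.strictMono_div_right_of_pos (by exact_mod_cast inv_pos.2 hc)
    (EReal.coe_ne_top _)

/-- The affine map `a ↦ c * a + C` on `EReal` as an order isomorphism, for `c > 0`. -/
noncomputable def affineIso (c C : ℝ) (hc : 0 < c) : EReal ≃o EReal :=
  StrictMono.orderIsoOfSurjective (fun a => (c : EReal) * a + (C : EReal))
    (fun _ _ hab => EReal.add_lt_add_right_coe (strictMono_coe_mul hc hab) C)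
    (by
      intro b
      induction b with
      | bot =>
          refine ⟨⊥, ?_⟩
          show (c : EReal) * ⊥ + (C : EReal) = ⊥
          rw [EReal.coe_mul_bot_of_pos hc, EReal.bot_add]
      | coe d =>
          refine ⟨(((d - C) / c : ℝ) : EReal), ?_⟩
          show (c : EReal) * (((d - C) / c : ℝ) : EReal) + (C : EReal) = (d : EReal)
          rw [← EReal.coe_mul, ← EReal.coe_add]
          norm_cast
          field_simp
          ring
      | top =>
          refine ⟨⊤, ?_⟩
          show (c : EReal) * ⊤ + (C : EReal) = ⊤
          rw [EReal.coe_mul_top_of_pos hc, EReal.top_add_coe])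

lemma iSup_coe_mul_add {ι : Sort*} (c C : ℝ) (hc : 0 < c) (g : ι → EReal) :
    ⨆ i, ((c : EReal) * g i + (C : EReal)) = (c : EReal) * (⨆ i, g i) + (C : EReal) := by
  have h := (affineIso c C hc).map_iSup g
  have hcoe : ∀ a : EReal, affineIso c C hc a = (c : EReal) * a + (C : EReal) := by
    intro a
    simp [affineIso, StrictMono.coe_orderIsoOfSurjective]
    rfl
  rw [hcoe] at h
  simp only [hcoe] at h
  exact h.symm

theorem stmt19 (f : ℝ → H → EReal)
    (hproper : ∀ t ≥ (0:ℝ), ProperFun (f t))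
    (hlsc : ∀ t ≥ (0:ℝ), LowerSemicontinuous (f t))
    (hconv : ∀ t ≥ (0:ℝ), ConvexEFun (f t))
    (x : H) (r : ℝ → ℝ) (hx : ∀ t ≥ (0:ℝ), f t x = ↑(r t))
    (v : H) (hv : v ∈ Subdiff (f 0) x)
    (s : ℝ → ℝ) (hs : ∀ t ≥ (0:ℝ), conjE (f t) v = ↑(s t)) :
    (∀ t ≥ (0:ℝ), 0 ≤ s t + r t - ⟪v, x⟫) ∧
    (s 0 + r 0 - ⟪v, x⟫ = 0) ∧
    ∀ τ > (0:ℝ), ∀ u : H,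
      conjE (fun w => (((τ ^ 2)⁻¹ : ℝ) : EReal) *
          (f τ (x + τ • w) - ↑(r τ + τ * ⟪v, w⟫))) u
        = (((τ ^ 2)⁻¹ : ℝ) : EReal) *
            (conjE (f τ) (v + τ • u) - ↑(s τ + τ * ⟪x, u⟫))
          + ↑((s τ + r τ - ⟪v, x⟫) / τ ^ 2) := by
  -- Part 1 : Fenchel–Young
  have part1 : ∀ t ≥ (0:ℝ), 0 ≤ s t + r t - ⟪v, x⟫ := by
    intro t ht
    have h1 : ((⟪v, x⟫ - r t : ℝ) : EReal) ≤ ((s t : ℝ) : EReal) := by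
      rw [← hs t ht, conjE]
      have := le_iSup (fun y : H => ((⟪v, y⟫ : ℝ) : EReal) - f t y) x
      rw [hx t ht] at this
      rw [EReal.coe_sub]
      exact this
    rw [EReal.coe_le_coe_iff] at h1
    linarith
  refine ⟨part1, ?_, ?_⟩
  · -- Part 2 : equality at 0 using the subgradient inequality
    have h2 : conjE (f 0) v ≤ ((⟪v, x⟫ - r 0 : ℝ) : EReal) := by
      rw [conjE]
      refine iSup_le fun z => ?_
      have hz := hv z
      rw [hx 0 le_rfl] at hz
      rcases ereal_ne_bot_cases (f 0 z) ((hproper 0 le_rfl).1 z) with htop | ⟨a, ha⟩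
      · rw [htop, EReal.sub_top]; exact bot_le
      · rw [ha] at hz ⊢
        rw [← EReal.coe_add, EReal.coe_le_coe_iff] at hz
        rw [← EReal.coe_sub, EReal.coe_le_coe_iff]
        rw [inner_sub_right] at hz
        linarith
    rw [hs 0 le_rfl, EReal.coe_le_coe_iff] at h2
    have := part1 0 le_rfl
    linarith
  · -- Part 3 : the conjugate identity
    intro τ hτ u
    have hτ' : τ ≠ 0 := ne_of_gt hτ
    set c : ℝ := (τ ^ 2)⁻¹ with hc_def
    have hc : 0 < c := by positivity
    set C : ℝ := c * r τ - τ⁻¹ * ⟪u, x⟫ - c * ⟪v, x⟫ with hC_def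
    set A : EReal := conjE (f τ) (v + τ • u) with hA_def
    -- A is not ⊥
    have hAbot : A ≠ ⊥ := by
      obtain ⟨y₀, hy₀⟩ := (hproper τ hτ.le).2
      have hy₀' := (hproper τ hτ.le).1 y₀
      set a₀ : ℝ := (f τ y₀).toReal with ha₀
      have hfy₀ : f τ y₀ = (a₀ : EReal) := (EReal.coe_toReal hy₀ hy₀').symm
      have hle : ((⟪v + τ • u, y₀⟫ - a₀ : ℝ) : EReal) ≤ A := by
        rw [hA_def, conjE]
        have := le_iSup (fun y : H => ((⟪v + τ • u, y⟫ : ℝ) : EReal) - f τ y) y₀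
        rw [hfy₀] at this
        rw [EReal.coe_sub]
        exact this
      exact ne_bot_of_le_ne_bot (EReal.coe_ne_bot _) hle
    -- reindex the conjugate at v + τu via the bijection w ↦ x + τ • w
    have hA : A = ⨆ w : H, (((⟪v + τ • u, x + τ • w⟫ : ℝ) : EReal) - f τ (x + τ • w)) := by
      rw [hA_def, conjE]
      have h := Equiv.iSup_comp
        (g := fun y : H => ((⟪v + τ • u, y⟫ : ℝ) : EReal) - f τ y)
        ⟨fun w => x + τ • w, fun y => τ⁻¹ • (y - x),
          fun w => by simp [smul_smul, inv_mul_cancel₀ hτ'],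
          fun y => by simp [smul_smul, mul_inv_cancel₀ hτ']⟩
      simp only [Equiv.coe_fn_mk] at h
      exact h.symm
    -- pointwise identity
    have hpt : ∀ w : H,
        ((⟪u, w⟫ : ℝ) : EReal) - (((c : ℝ) : EReal) *
            (f τ (x + τ • w) - ((r τ + τ * ⟪v, w⟫ : ℝ) : EReal)))
          = ((c : ℝ) : EReal) *
              (((⟪v + τ • u, x + τ • w⟫ : ℝ) : EReal) - f τ (x + τ • w))
            + ((C : ℝ) : EReal) := by
      intro w
      rcases ereal_ne_bot_cases (f τ (x + τ • w)) ((hproper τ hτ.le).1 (x + τ • w))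
        with htop | ⟨a, ha⟩
      · simp only [htop, EReal.top_sub_coe, EReal.coe_mul_top_of_pos hc, EReal.sub_top,
          EReal.coe_mul_bot_of_pos hc, EReal.bot_add]
      · rw [ha]
        norm_cast
        have hinner : ⟪v + τ • u, x + τ • w⟫
            = ⟪v, x⟫ + τ * ⟪v, w⟫ + τ * ⟪u, x⟫ + τ ^ 2 * ⟪u, w⟫ := by
          rw [inner_add_left, inner_add_right, inner_add_right,
            real_inner_smul_left, real_inner_smul_left, real_inner_smul_right,
            real_inner_smul_right]
          ring
        rw [hinner, hC_def, hc_def]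
        field_simp
        ring
    -- put together the left-hand side
    have hLHS : conjE (fun w => (((τ ^ 2)⁻¹ : ℝ) : EReal) *
          (f τ (x + τ • w) - ↑(r τ + τ * ⟪v, w⟫))) u
        = ((c : ℝ) : EReal) * A + ((C : ℝ) : EReal) := by
      rw [conjE]
      calc (⨆ w : H, ((⟪u, w⟫ : ℝ) : EReal) - (((c : ℝ) : EReal) *
              (f τ (x + τ • w) - ((r τ + τ * ⟪v, w⟫ : ℝ) : EReal))))
          = ⨆ w : H, (((c : ℝ) : EReal) *
              (((⟪v + τ • u, x + τ • w⟫ : ℝ) : EReal) - f τ (x + τ • w))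
              + ((C : ℝ) : EReal)) := by
            exact iSup_congr hpt
        _ = ((c : ℝ) : EReal) *
              (⨆ w : H, (((⟪v + τ • u, x + τ • w⟫ : ℝ) : EReal) - f τ (x + τ • w)))
              + ((C : ℝ) : EReal) := iSup_coe_mul_add c C hc _
        _ = ((c : ℝ) : EReal) * A + ((C : ℝ) : EReal) := by rw [← hA]
    rw [hLHS]
    -- now compute the right-hand side
    rcases ereal_ne_bot_cases A hAbot with htop | ⟨a, ha⟩
    · rw [htop, EReal.top_sub_coe, EReal.coe_mul_top_of_pos hc, EReal.top_add_coe,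
        EReal.top_add_coe]
    · rw [ha]
      norm_cast
      rw [hC_def, hc_def, real_inner_comm x u]
      field_simp
      ring
end
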